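/- Let σ ∈ ℂ and let q₊, q₋ : ℝ → ℂ be differentiable functions satisfying, for all t ∈ ℝ, i q₊'(t) = -2 σ q₊(t)² q₋(-t) and i q₋'(t) = -2 σ q₋(t)² q₊(-t). Then: (a) the product q₊(t) q₋(-t) is constant in t, equal to C₀ := q₊(0) q₋(0); and (b) for all t ∈ ℝ, q₊(t) = q₊(0) e^{2 i σ C₀ t} and q₋(t) = q₋(0) e^{2 i σ C₀ t}. -/

import Mathlib

/-- Analysis of the boundary ODE system of the nonlocal reverse space-time NLS equation:
the product `q₊(t) q₋(-t)` is constant, equal to `C₀ = q₊(0) q₋(0)`, and the boundary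
values evolve as pure exponentials `q₊(0) e^{2iσC₀t}`, `q₋(0) e^{2iσC₀t}`. -/
theorem rst_nls_boundary_ode (σ : ℂ) (qp qm : ℝ → ℂ)
    (hqp : Differentiable ℝ qp) (hqm : Differentiable ℝ qm)
    (hp : ∀ t : ℝ, Complex.I * deriv qp t = -2 * σ * (qp t) ^ 2 * qm (-t))
    (hm : ∀ t : ℝ, Complex.I * deriv qm t = -2 * σ * (qm t) ^ 2 * qp (-t)) :
    (∀ t : ℝ, qp t * qm (-t) = qp 0 * qm 0) ∧
    (∀ t : ℝ, qp t = qp 0 * Complex.exp (2 * Complex.I * σ * (qp 0 * qm 0) * t)) ∧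
    (∀ t : ℝ, qm t = qm 0 * Complex.exp (2 * Complex.I * σ * (qp 0 * qm 0) * t)) := by
  have hI : Complex.I ≠ 0 := Complex.I_ne_zero
  have hp' : ∀ t : ℝ, deriv qp t = 2 * Complex.I * σ * (qp t) ^ 2 * qm (-t) := by
    intro t
    have h := hp t
    have : deriv qp t = -Complex.I * (Complex.I * deriv qp t) := by
      rw [← mul_assoc]; simp [Complex.I_mul_I]
    rw [this, h]; ring
  have hm' : ∀ t : ℝ, deriv qm t = 2 * Complex.I * σ * (qm t) ^ 2 * qp (-t) := by
    intro t
    have h := hm t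
    have : deriv qm t = -Complex.I * (Complex.I * deriv qm t) := by
      rw [← mul_assoc]; simp [Complex.I_mul_I]
    rw [this, h]; ring
  -- the product is constant
  set P : ℝ → ℂ := fun t => qp t * qm (-t) with hPdef
  have hPd : ∀ t : ℝ, HasDerivAt P 0 t := by
    intro t
    have h1 : HasDerivAt qp (deriv qp t) t := (hqp t).hasDerivAt
    have h2 : HasDerivAt (fun s : ℝ => qm (-s)) (deriv qm (-t) * (-1)) t := by
      have h0 : HasDerivAt (qm ∘ (Neg.neg : ℝ → ℝ)) ((-1 : ℝ) • deriv qm (-t)) t :=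
        HasDerivAt.scomp t ((hqm (-t)).hasDerivAt) (hasDerivAt_neg t)
      have h1 : ((-1 : ℝ) • deriv qm (-t)) = deriv qm (-t) * (-1) := by
        simp [mul_comm]
      rw [h1] at h0
      exact h0
    have h3 := h1.mul h2
    have : deriv qp t * qm (-t) + qp t * (deriv qm (-t) * (-1)) = 0 := by
      rw [hp' t, hm' (-t)]
      simp only [neg_neg]
      ring
    rwa [this] at h3
  have hPconst : ∀ t : ℝ, P t = P 0 := by
    intro t
    exact is_const_of_deriv_eq_zero (fun s => (hPd s).differentiableAt)
      (fun s => (hPd s).deriv) t 0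
  have hP0 : P 0 = qp 0 * qm 0 := by simp [hPdef]
  have key : ∀ t : ℝ, qp t * qm (-t) = qp 0 * qm 0 := by
    intro t; rw [← hP0]; exact hPconst t
  refine ⟨key, ?_, ?_⟩
  all_goals
    set c : ℂ := 2 * Complex.I * σ * (qp 0 * qm 0) with hc
  · -- qp
    have hg : ∀ t : ℝ, HasDerivAt (fun s : ℝ => qp s * Complex.exp (-(c * s))) 0 t := by
      intro t
      have h1 : HasDerivAt qp (deriv qp t) t := (hqp t).hasDerivAt
      have h2 : HasDerivAt (fun s : ℝ => Complex.exp (-(c * s)))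
          (Complex.exp (-(c * t)) * (-c)) t := by
        have hl : HasDerivAt (fun s : ℝ => -(c * s)) (-c) t := by
          have := (Complex.ofRealCLM.hasDerivAt (x := t)).const_mul c
          exact this.neg.congr_deriv (by simp)
        exact (Complex.hasDerivAt_exp (-(c * t))).comp t hl
      have h3 := h1.mul h2
      have heq : deriv qp t * Complex.exp (-(c * t)) +
          qp t * (Complex.exp (-(c * t)) * (-c)) = 0 := by
        rw [hp' t]
        have : (2 : ℂ) * Complex.I * σ * qp t ^ 2 * qm (-t)
            = c * qp t := by
          rw [hc, ← key t]; ring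
        rw [this]; ring
      rwa [heq] at h3
    intro t
    have := is_const_of_deriv_eq_zero (fun s => (hg s).differentiableAt)
      (fun s => (hg s).deriv) t 0
    simp only [Complex.ofReal_zero, mul_zero, neg_zero, Complex.exp_zero, mul_one] at this
    have h4 : qp t = qp 0 * Complex.exp (c * t) := by
      have h5 := congrArg (· * Complex.exp (c * t)) this
      simpa [mul_assoc, ← Complex.exp_add] using h5
    simpa [hc] using h4
  · -- qm
    have hg : ∀ t : ℝ, HasDerivAt (fun s : ℝ => qm s * Complex.exp (-(c * s))) 0 t := by
      intro t
      have h1 : HasDerivAt qm (deriv qm t) t := (hqm t).hasDerivAt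
      have h2 : HasDerivAt (fun s : ℝ => Complex.exp (-(c * s)))
          (Complex.exp (-(c * t)) * (-c)) t := by
        have hl : HasDerivAt (fun s : ℝ => -(c * s)) (-c) t := by
          have := (Complex.ofRealCLM.hasDerivAt (x := t)).const_mul c
          exact this.neg.congr_deriv (by simp)
        exact (Complex.hasDerivAt_exp (-(c * t))).comp t hl
      have h3 := h1.mul h2
      have heq : deriv qm t * Complex.exp (-(c * t)) +
          qm t * (Complex.exp (-(c * t)) * (-c)) = 0 := by
        rw [hm' t]
        have : (2 : ℂ) * Complex.I * σ * qm t ^ 2 * qp (-t)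
            = c * qm t := by
          have hk := key (-t)
          rw [neg_neg] at hk
          rw [hc, ← hk]; ring
        rw [this]; ring
      rwa [heq] at h3
    intro t
    have := is_const_of_deriv_eq_zero (fun s => (hg s).differentiableAt)
      (fun s => (hg s).deriv) t 0
    simp only [Complex.ofReal_zero, mul_zero, neg_zero, Complex.exp_zero, mul_one] at this
    have h4 : qm t = qm 0 * Complex.exp (c * t) := by
      have h5 := congrArg (· * Complex.exp (c * t)) this
      simpa [mul_assoc, ← Complex.exp_add] using h5
    simpa [hc] using h4
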